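/- Assume char F = 2 and let f be a derivation of N. (i) For all i, j with i+1 < j and (i,j) ∉ {(1,3), (t−2,t)}, and every A ∈ N^{ij}, the entry f(A) r s is zero unless either (b r = i and b s ≥ j) or (b s = j and b r < i). (ii) For every A ∈ N^{13}, the entry f(A) r s is zero unless either (b r = 1 and b s ≥ 3) or (b r, b s) = (2, t). (iii) For every A ∈ N^{t−2,t}, the entry f(A) r s is zero unless either (b s = t and b r ≤ t−2) or (b r, b s) = (1, t−1). -/

import Mathlib

/-- `A` is a strictly block upper triangular matrix relative to the block function `b`
(index `r` lies in block `b r`): `A r s = 0` whenever `b r ≥ b s`. -/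
def InN {F : Type*} [Field F] {n : ℕ} (b : Fin n → ℕ)
    (A : Matrix (Fin n) (Fin n) F) : Prop :=
  ∀ r s, b s ≤ b r → A r s = 0

/-- `A` lies in the `(i,j)` block `N^{ij}`: `A r s = 0` unless `b r = i` and `b s = j`. -/
def InBlk {F : Type*} [Field F] {n : ℕ} (b : Fin n → ℕ) (i j : ℕ)
    (A : Matrix (Fin n) (Fin n) F) : Prop :=
  ∀ r s, ¬(b r = i ∧ b s = j) → A r s = 0

/-- `f` is a derivation of the Lie algebra `N` of strictly block upper triangular matrices:
it maps `N` into `N` and satisfies `f [X,Y] = [f X, Y] + [X, f Y]` on `N`,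
where `[X,Y] = XY - YX`. -/
def IsDerN {F : Type*} [Field F] {n : ℕ} (b : Fin n → ℕ)
    (f : Matrix (Fin n) (Fin n) F →ₗ[F] Matrix (Fin n) (Fin n) F) : Prop :=
  (∀ A, InN b A → InN b (f A)) ∧
  ∀ X Y, InN b X → InN b Y →
    f (X * Y - Y * X) = (f X * Y - Y * f X) + (X * f Y - f Y * X)

open Matrix

section Helpers

variable {F : Type*} [Field F] {n : ℕ} (b : Fin n → ℕ)

private lemma mulE (M : Matrix (Fin n) (Fin n) F) (u q r s : Fin n) :
    (M * single u q (1:F)) r s = if s = q then M r u else 0 := by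
  split_ifs with h
  · subst h; simp [Matrix.mul_apply, Matrix.single, Matrix.of_apply]
  · simp [Matrix.mul_apply, Matrix.single, Matrix.of_apply, h, Ne.symm h]

private lemma Emul (M : Matrix (Fin n) (Fin n) F) (u q r s : Fin n) :
    (single u q (1:F) * M) r s = if r = u then M q s else 0 := by
  split_ifs with h
  · subst h; simp [Matrix.mul_apply, Matrix.single, Matrix.of_apply]
  · simp [Matrix.mul_apply, Matrix.single, Matrix.of_apply, h, Ne.symm h]

private lemma inN_E {p u : Fin n} (h : b p < b u) : InN b (single p u (1:F)) := by
  intro r s hle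
  simp only [single, of_apply]
  rw [if_neg]
  rintro ⟨rfl, rfl⟩
  omega

private lemma fN {f : Matrix (Fin n) (Fin n) F →ₗ[F] Matrix (Fin n) (Fin n) F}
    (hf : IsDerN b f) {p u : Fin n} (h : b p < b u) (x y : Fin n) (hxy : b y ≤ b x) :
    f (single p u (1:F)) x y = 0 :=
  hf.1 _ (inN_E b h) x y hxy

private lemma keyC {f : Matrix (Fin n) (Fin n) F →ₗ[F] Matrix (Fin n) (Fin n) F}
    (hf : IsDerN b f) {p u q : Fin n} (h1 : b p < b u) (h2 : b u < b q) (r s : Fin n) :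
    f (single p q (1:F)) r s =
      ((if s = q then f (single p u (1:F)) r u else 0)
        - (if r = u then f (single p u (1:F)) q s else 0))
      + ((if r = p then f (single u q (1:F)) u s else 0)
        - (if s = u then f (single u q (1:F)) r p else 0)) := by
  have hqp : q ≠ p := fun h => by rw [h] at h2; omega
  have hXY : single p u (1:F) * single u q 1 = single p q 1 := by
    rw [single_mul_single_same, one_mul]
  have hYX : single u q (1:F) * single p u 1 = 0 :=
    single_mul_single_of_ne 1 u q _ hqp 1
  have hd := hf.2 _ _ (inN_E b h1) (inN_E b h2)
  rw [hXY, hYX, sub_zero] at hd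
  have h := congrFun (congrFun hd r) s
  simp only [Matrix.add_apply, Matrix.sub_apply, mulE, Emul] at h
  exact h

/-- `keyC` with all four terms killed. -/
private lemma keyC0 {f : Matrix (Fin n) (Fin n) F →ₗ[F] Matrix (Fin n) (Fin n) F}
    (hf : IsDerN b f) {p u q : Fin n} (h1 : b p < b u) (h2 : b u < b q) (r s : Fin n)
    (k1 : s = q → f (single p u (1:F)) r u = 0)
    (k2 : r = u → f (single p u (1:F)) q s = 0)
    (k3 : r = p → f (single u q (1:F)) u s = 0)
    (k4 : s = u → f (single u q (1:F)) r p = 0) :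
    f (single p q (1:F)) r s = 0 := by
  rw [keyC b hf h1 h2 r s]
  have e1 : (if s = q then f (single p u (1:F)) r u else 0) = 0 := by
    split_ifs with h; exacts [k1 h, rfl]
  have e2 : (if r = u then f (single p u (1:F)) q s else 0) = 0 := by
    split_ifs with h; exacts [k2 h, rfl]
  have e3 : (if r = p then f (single u q (1:F)) u s else 0) = 0 := by
    split_ifs with h; exacts [k3 h, rfl]
  have e4 : (if s = u then f (single u q (1:F)) r p else 0) = 0 := by
    split_ifs with h; exacts [k4 h, rfl]
  rw [e1, e2, e3, e4]; ring

private lemma keyZ {f : Matrix (Fin n) (Fin n) F →ₗ[F] Matrix (Fin n) (Fin n) F}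
    (hf : IsDerN b f) {X Z : Matrix (Fin n) (Fin n) F}
    (hX : InN b X) (hZ : InN b Z) (h1 : X * Z = 0) (h2 : Z * X = 0) (r s : Fin n) :
    (f X * Z) r s + (X * f Z) r s = (Z * f X) r s + (f Z * X) r s := by
  have hd := hf.2 X Z hX hZ
  rw [h1, h2, sub_zero, map_zero] at hd
  have h := congrFun (congrFun hd.symm r) s
  simp only [Matrix.add_apply, Matrix.sub_apply, Matrix.zero_apply] at h
  linear_combination h

/-- Killing an entry in a column strictly right of column `b s`, using a block to the right. -/
private lemma argA {t : ℕ} {f : Matrix (Fin n) (Fin n) F →ₗ[F] Matrix (Fin n) (Fin n) F}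
    (hf : IsDerN b f) (hsurj : ∀ k, 1 ≤ k → k ≤ t → ∃ r, b r = k)
    {p q : Fin n} (r s : Fin n) (h4 : b p < b q) (h1 : b q < b s) (h2 : b s < t)
    (h3 : b r ≠ b p) :
    f (single p q (1:F)) r s = 0 := by
  obtain ⟨w, hw⟩ := hsurj t (by omega) le_rfl
  have hqs : q ≠ s := fun h => by rw [h] at h1; omega
  have hwp : w ≠ p := fun h => by rw [h] at hw; omega
  have hrel := keyZ b hf (inN_E b h4) (inN_E b (show b s < b w by omega))
    (single_mul_single_of_ne 1 p q _ hqs 1) (single_mul_single_of_ne 1 s w _ hwp 1) r w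
  simp only [mulE, Emul, if_true, eq_self_iff_true] at hrel
  have hrp : r ≠ p := fun h => h3 (by rw [h])
  have hwq : w ≠ q := fun h => by rw [h] at hw; omega
  rw [if_neg hrp, if_neg hwq] at hrel
  have hww : f (single p q (1:F)) w w = 0 := fN b hf h4 w w le_rfl
  rcases eq_or_ne r s with hrs | hrs
  · rw [if_pos hrs, hww] at hrel; linear_combination hrel
  · rw [if_neg hrs] at hrel; linear_combination hrel

/-- Killing an entry in a row strictly left of row `b r ≥ 2`, using block 1. -/
private lemma argB {t : ℕ} {f : Matrix (Fin n) (Fin n) F →ₗ[F] Matrix (Fin n) (Fin n) F}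
    (hf : IsDerN b f) (hub : ∀ r, b r ≤ t) (hsurj : ∀ k, 1 ≤ k → k ≤ t → ∃ r, b r = k)
    {p q : Fin n} (r s : Fin n) (h4 : b p < b q) (h1 : 1 < b r) (h2 : b r < b p)
    (h3 : b s ≠ b q) :
    f (single p q (1:F)) r s = 0 := by
  have h5 := hub q
  obtain ⟨w, hw⟩ := hsurj 1 le_rfl (by omega)
  have hqw : q ≠ w := fun h => by rw [← h] at hw; omega
  have hrp : r ≠ p := fun h => by rw [h] at h2; omega
  have hrel := keyZ b hf (inN_E b h4) (inN_E b (show b w < b r by omega))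
    (single_mul_single_of_ne 1 p q _ hqw 1) (single_mul_single_of_ne 1 w r _ hrp 1) w s
  simp only [mulE, Emul, if_true, eq_self_iff_true] at hrel
  have hwp : w ≠ p := fun h => by rw [h] at hw; omega
  have hsq : s ≠ q := fun h => h3 (by rw [h])
  rw [if_neg hwp, if_neg hsq] at hrel
  have hww : f (single p q (1:F)) w w = 0 := fN b hf h4 w w le_rfl
  rcases eq_or_ne s r with hsr | hsr
  · rw [if_pos hsr, hww] at hrel; linear_combination -hrel
  · rw [if_neg hsr] at hrel; linear_combination -hrel

/-- Killing an entry of `f (E p u)` in a row below block `b p ≥ 2`, using block 1 on the left. -/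
private lemma argB' {t : ℕ} {f : Matrix (Fin n) (Fin n) F →ₗ[F] Matrix (Fin n) (Fin n) F}
    (hf : IsDerN b f) (hub : ∀ r, b r ≤ t) (hsurj : ∀ k, 1 ≤ k → k ≤ t → ∃ r, b r = k)
    {p u : Fin n} (q s : Fin n) (h1 : 1 < b p) (h2 : b p < b u) (h3 : b s ≠ b u)
    (h4 : b p < b q) :
    f (single p u (1:F)) q s = 0 := by
  have h5 := hub p
  obtain ⟨v, hv⟩ := hsurj 1 le_rfl (by omega)
  have huv : u ≠ v := fun h => by rw [← h] at hv; omega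
  have hqp : q ≠ p := fun h => by rw [h] at h4; omega
  have hrel := keyZ b hf (inN_E b h2) (inN_E b (show b v < b q by omega))
    (single_mul_single_of_ne 1 p u _ huv 1) (single_mul_single_of_ne 1 v q _ hqp 1) v s
  simp only [mulE, Emul, if_true, eq_self_iff_true] at hrel
  have hvp : v ≠ p := fun h => by rw [h] at hv; omega
  have hsu : s ≠ u := fun h => h3 (by rw [h])
  rw [if_neg hvp, if_neg hsu] at hrel
  have hvv : f (single p u (1:F)) v v = 0 := fN b hf h2 v v le_rfl
  rcases eq_or_ne s q with hsq | hsq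
  · rw [if_pos hsq, hvv] at hrel; linear_combination -hrel
  · rw [if_neg hsq] at hrel; linear_combination -hrel

/-- Killing an entry of `f (E u q)` in a column left of column `b q < t`, using block t. -/
private lemma argC {t : ℕ} {f : Matrix (Fin n) (Fin n) F →ₗ[F] Matrix (Fin n) (Fin n) F}
    (hf : IsDerN b f) (hsurj : ∀ k, 1 ≤ k → k ≤ t → ∃ r, b r = k)
    {u q : Fin n} (r p : Fin n) (hY : b u < b q) (hpq : b p ≠ b q) (hpt : b p < t)
    (hut : b u ≠ t) (hqt : b q ≠ t) (hru : b r ≠ b u) (hrp : b r ≠ b p) :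
    f (single u q (1:F)) r p = 0 := by
  obtain ⟨w, hw⟩ := hsurj t (by omega) le_rfl
  have hqp : q ≠ p := fun h => hpq (by rw [h])
  have hwu : w ≠ u := fun h => by rw [h] at hw; exact hut hw
  have hrel := keyZ b hf (inN_E b hY) (inN_E b (show b p < b w by omega))
    (single_mul_single_of_ne 1 u q _ hqp 1) (single_mul_single_of_ne 1 p w _ hwu 1) r w
  simp only [mulE, Emul, if_true, eq_self_iff_true] at hrel
  have hru' : r ≠ u := fun h => hru (by rw [h])
  have hrp' : r ≠ p := fun h => hrp (by rw [h])
  have hwq : w ≠ q := fun h => by rw [h] at hw; exact hqt hw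
  rw [if_neg hru', if_neg hrp', if_neg hwq] at hrel
  linear_combination hrel

end Helpers

section Main

variable {F : Type*} [Field F] {n : ℕ} (b : Fin n → ℕ)

private lemma bigL {t : ℕ} {f : Matrix (Fin n) (Fin n) F →ₗ[F] Matrix (Fin n) (Fin n) F}
    (hf : IsDerN b f)
    (hlb : ∀ r, 1 ≤ b r) (hub : ∀ r, b r ≤ t)
    (hsurj : ∀ k, 1 ≤ k → k ≤ t → ∃ r, b r = k)
    {i j : ℕ} (hij : i + 1 < j) (hjt : j ≤ t)
    {p q : Fin n} (hp : b p = i) (hq : b q = j) (r s : Fin n)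
    (H1 : ¬(b r = i ∧ j ≤ b s)) (H2 : ¬(b s = j ∧ b r < i))
    (H3 : ¬(i = 1 ∧ j = 3 ∧ b r = 2 ∧ b s = t ∧ 3 < t))
    (H4 : ¬(i = t - 2 ∧ j = t ∧ b r = 1 ∧ b s = t - 1 ∧ 1 < t - 2)) :
    f (single p q (1:F)) r s = 0 := by
  have hi : 1 ≤ i := hp ▸ hlb p
  have har := hlb r; have has := hlb s
  have hbr := hub r; have hbs := hub s
  rcases lt_trichotomy (b r) i with hA | hA | hA
  · -- b r < i
    rcases lt_trichotomy (b s) j with hB | hB | hB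
    · -- b s < j
      rcases Nat.lt_or_ge 1 (b r) with h2r | h2r
      · exact argB b hf hub hsurj r s (by omega) h2r (by omega) (by omega)
      · -- b r = 1, i ≥ 2
        by_cases hmid : i < b s
        · by_cases hj2 : j = i + 2
          · -- forced k = i+1, b s = i+1
            obtain ⟨u, hu⟩ := hsurj (i+1) (by omega) (by omega)
            by_cases hus : s = u
            · subst hus
              rw [keyC b hf (show b p < b s by omega) (show b s < b q by omega) r s]
              have e1 : (if s = q then f (single p s (1:F)) r s else 0) = 0 :=
                if_neg (by intro h; subst h; omega)
              have e2 : (if r = s then f (single p s (1:F)) q s else 0) = 0 :=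
                if_neg (by intro h; subst h; omega)
              have e3 : (if r = p then f (single s q (1:F)) s s else 0) = 0 :=
                if_neg (by intro h; subst h; omega)
              rw [e1, e2, e3, if_pos rfl]
              rcases Nat.lt_or_ge j t with hjt' | hjt'
              · rw [argC b hf hsurj r p (show b s < b q by omega) (by omega) (by omega)
                  (by omega) (by omega) (by omega) (by omega)]
                ring
              · exact absurd (by omega) H4
            · refine keyC0 b hf (show b p < b u by omega) (show b u < b q by omega) r s
                ?_ ?_ ?_ ?_
              · intro h; exfalso; subst h; omega
              · intro h; exfalso; subst h; omega
              · intro h; exfalso; subst h; omega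
              · intro h; exact absurd h hus
          · -- j ≥ i+3, choose k avoiding b s
            rcases eq_or_ne (b s) (i+1) with hsk | hsk
            · obtain ⟨u, hu⟩ := hsurj (i+2) (by omega) (by omega)
              refine keyC0 b hf (show b p < b u by omega) (show b u < b q by omega) r s
                ?_ ?_ ?_ ?_ <;> · intro h; exfalso; subst h; omega
            · obtain ⟨u, hu⟩ := hsurj (i+1) (by omega) (by omega)
              refine keyC0 b hf (show b p < b u by omega) (show b u < b q by omega) r s
                ?_ ?_ ?_ ?_ <;> · intro h; exfalso; subst h; omega
        · -- b s ≤ i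
          obtain ⟨u, hu⟩ := hsurj (i+1) (by omega) (by omega)
          refine keyC0 b hf (show b p < b u by omega) (show b u < b q by omega) r s
            ?_ ?_ ?_ ?_ <;> · intro h; exfalso; subst h; omega
    · exact absurd ⟨hB, hA⟩ H2
    · -- b s > j
      rcases Nat.lt_or_ge (b s) t with hst | hst
      · exact argA b hf hsurj r s (by omega) (by omega) hst (by omega)
      · obtain ⟨u, hu⟩ := hsurj (i+1) (by omega) (by omega)
        refine keyC0 b hf (show b p < b u by omega) (show b u < b q by omega) r s
          ?_ ?_ ?_ ?_ <;> · intro h; exfalso; subst h; omega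
  · -- b r = i, so b s < j
    have hB : b s < j := by
      rcases Nat.lt_or_ge (b s) j with h | h
      · exact h
      · exact absurd ⟨hA, h⟩ H1
    obtain ⟨u, hu⟩ := hsurj (j-1) (by omega) (by omega)
    refine keyC0 b hf (show b p < b u by omega) (show b u < b q by omega) r s ?_ ?_ ?_ ?_
    · intro h; exfalso; subst h; omega
    · intro h; exfalso; subst h; omega
    · intro _; exact fN b hf (show b u < b q by omega) u s (by omega)
    · intro _; exact fN b hf (show b u < b q by omega) r p (by omega)
  · -- b r > i
    rcases Nat.lt_or_ge j (b s) with hB | hB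
    · -- b s > j
      rcases Nat.lt_or_ge (b s) t with hst | hst
      · exact argA b hf hsurj r s (by omega) (by omega) hst (by omega)
      · -- b s = t
        rcases Nat.lt_or_ge (b r) j with hrj | hrj
        · by_cases hj2 : j = i + 2
          · -- b r = i+1
            obtain ⟨u, hu⟩ := hsurj (i+1) (by omega) (by omega)
            by_cases hur : r = u
            · subst hur
              rcases Nat.lt_or_ge 1 i with hi2 | hi2
              · rw [keyC b hf (show b p < b r by omega) (show b r < b q by omega) r s]
                have e1 : (if s = q then f (single p r (1:F)) r r else 0) = 0 :=
                  if_neg (by intro h; subst h; omega)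
                have e3 : (if r = p then f (single r q (1:F)) r s else 0) = 0 :=
                  if_neg (by intro h; subst h; omega)
                have e4 : (if s = r then f (single r q (1:F)) r p else 0) = 0 :=
                  if_neg (by intro h; subst h; omega)
                rw [e1, e3, e4, if_pos rfl]
                rw [argB' b hf hub hsurj q s (by omega) (by omega) (by omega) (by omega)]
                ring
              · exact absurd (by omega) H3
            · refine keyC0 b hf (show b p < b u by omega) (show b u < b q by omega) r s
                ?_ ?_ ?_ ?_
              · intro h; exfalso; subst h; omega
              · intro h; exact absurd h hur
              · intro h; exfalso; subst h; omega
              · intro h; exfalso; subst h; omega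
          · -- j ≥ i+3, choose k avoiding b r
            rcases eq_or_ne (b r) (i+1) with hrk | hrk
            · obtain ⟨u, hu⟩ := hsurj (i+2) (by omega) (by omega)
              refine keyC0 b hf (show b p < b u by omega) (show b u < b q by omega) r s
                ?_ ?_ ?_ ?_ <;> · intro h; exfalso; subst h; omega
            · obtain ⟨u, hu⟩ := hsurj (i+1) (by omega) (by omega)
              refine keyC0 b hf (show b p < b u by omega) (show b u < b q by omega) r s
                ?_ ?_ ?_ ?_ <;> · intro h; exfalso; subst h; omega
        · -- b r ≥ j
          obtain ⟨u, hu⟩ := hsurj (i+1) (by omega) (by omega)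
          refine keyC0 b hf (show b p < b u by omega) (show b u < b q by omega) r s
            ?_ ?_ ?_ ?_ <;> · intro h; exfalso; subst h; omega
    · -- b s ≤ j
      obtain ⟨u, hu⟩ := hsurj (i+1) (by omega) (by omega)
      refine keyC0 b hf (show b p < b u by omega) (show b u < b q by omega) r s ?_ ?_ ?_ ?_
      · intro _; exact fN b hf (show b p < b u by omega) r u (by omega)
      · intro _; exact fN b hf (show b p < b u by omega) q s (by omega)
      · intro h; exfalso; subst h; omega
      · intro _; exact fN b hf (show b u < b q by omega) r p (by omega)

private lemma mainL {t : ℕ} {f : Matrix (Fin n) (Fin n) F →ₗ[F] Matrix (Fin n) (Fin n) F}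
    (hf : IsDerN b f)
    (hlb : ∀ r, 1 ≤ b r) (hub : ∀ r, b r ≤ t)
    (hsurj : ∀ k, 1 ≤ k → k ≤ t → ∃ r, b r = k)
    {i j : ℕ} (hij : i + 1 < j) (hjt : j ≤ t)
    {A : Matrix (Fin n) (Fin n) F} (hA : InBlk b i j A) (r s : Fin n)
    (H1 : ¬(b r = i ∧ j ≤ b s)) (H2 : ¬(b s = j ∧ b r < i))
    (H3 : ¬(i = 1 ∧ j = 3 ∧ b r = 2 ∧ b s = t ∧ 3 < t))
    (H4 : ¬(i = t - 2 ∧ j = t ∧ b r = 1 ∧ b s = t - 1 ∧ 1 < t - 2)) :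
    f A r s = 0 := by
  have hrep : A = ∑ p : Fin n, ∑ q : Fin n, A p q • single p q (1:F) := by
    conv_lhs => rw [matrix_eq_sum_single A]
    refine Finset.sum_congr rfl fun p _ => Finset.sum_congr rfl fun q _ => ?_
    rw [smul_single, smul_eq_mul, mul_one]
  rw [hrep, map_sum, Matrix.sum_apply]
  refine Finset.sum_eq_zero fun p _ => ?_
  rw [map_sum, Matrix.sum_apply]
  refine Finset.sum_eq_zero fun q _ => ?_
  rw [_root_.map_smul, Matrix.smul_apply, smul_eq_mul]
  by_cases hpq : b p = i ∧ b q = j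
  · rw [bigL b hf hlb hub hsurj hij hjt hpq.1 hpq.2 r s H1 H2 H3 H4, mul_zero]
  · rw [hA p q hpq, zero_mul]

end Main

theorem stmt12 {F : Type*} [Field F] {n t : ℕ} (b : Fin n → ℕ)
    (hn : 1 ≤ n) (ht : 3 ≤ t) (hmono : Monotone b)
    (hlb : ∀ r, 1 ≤ b r) (hub : ∀ r, b r ≤ t)
    (hsurj : ∀ k, 1 ≤ k → k ≤ t → ∃ r, b r = k)
    (hchar : ringChar F = 2)
    (f : Matrix (Fin n) (Fin n) F →ₗ[F] Matrix (Fin n) (Fin n) F)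
    (hf : IsDerN b f) :
    (∀ i j, 1 ≤ i → i + 1 < j → j ≤ t → ¬(i = 1 ∧ j = 3) → ¬(i = t - 2 ∧ j = t) →
      ∀ A, InBlk b i j A → ∀ r s,
        ¬(b r = i ∧ j ≤ b s) → ¬(b s = j ∧ b r < i) → f A r s = 0) ∧
    (∀ A, InBlk b 1 3 A → ∀ r s,
      ¬(b r = 1 ∧ 3 ≤ b s) → ¬(b r = 2 ∧ b s = t) → f A r s = 0) ∧
    (∀ A, InBlk b (t - 2) t A → ∀ r s,
      ¬(b s = t ∧ b r ≤ t - 2) → ¬(b r = 1 ∧ b s = t - 1) → f A r s = 0) := by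
  refine ⟨?_, ?_, ?_⟩
  · intro i j hi hij hjt hne1 hne2 A hA r s h1 h2
    refine mainL b hf hlb hub hsurj hij hjt hA r s h1 h2 ?_ ?_
    · rintro ⟨hi1, hj3, -⟩; exact hne1 ⟨hi1, hj3⟩
    · rintro ⟨hi1, hj3, -⟩; exact hne2 ⟨hi1, hj3⟩
  · intro A hA r s h1 h2
    have hr := hlb r
    refine mainL (i := 1) (j := 3) b hf hlb hub hsurj (by omega) ht hA r s h1 ?_ ?_ ?_
    · rintro ⟨-, h⟩; omega
    · rintro ⟨-, -, hr2, hst, -⟩; exact h2 ⟨hr2, hst⟩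
    · rintro ⟨h, -, -, -, h'⟩; omega
  · intro A hA r s h1 h2
    have hr := hub r
    have hs := hub s
    refine mainL (i := t - 2) (j := t) b hf hlb hub hsurj (by omega) le_rfl hA r s ?_ ?_ ?_ ?_
    · rintro ⟨ha, hb⟩; exact h1 ⟨by omega, by omega⟩
    · rintro ⟨ha, hb⟩; exact h1 ⟨ha, by omega⟩
    · rintro ⟨-, h', -, -, h''⟩; omega
    · rintro ⟨-, -, ha, hb, -⟩; exact h2 ⟨ha, hb⟩
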